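/- Let n be a positive integer with n not divisible by 5. If there exist integers X, Y, Z such that X² + 5Y² + 10Z² = 8n, then there exist integers a, b, c, all odd, such that a² + 5b² + 10c² = 8n. -/
import Mathlib

private lemma sq_mod8 (x : ℤ) :
    (x % 2 = 1 ∧ x ^ 2 % 8 = 1) ∨ (x % 2 = 0 ∧ (x ^ 2 % 8 = 0 ∨ x ^ 2 % 8 = 4)) := by
  obtain ⟨d, hd | hd⟩ := Int.even_or_odd' x <;>
    obtain ⟨e, he | he⟩ := Int.even_or_odd' d <;> subst hd <;> subst he
  · refine Or.inr ⟨by omega, Or.inl ?_⟩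
    rw [show (2 * (2 * e)) ^ 2 = 8 * (2 * e ^ 2) by ring]
    exact Int.mul_emod_right 8 _
  · refine Or.inr ⟨by omega, Or.inr ?_⟩
    rw [show (2 * (2 * e + 1)) ^ 2 = 4 + 8 * (2 * e ^ 2 + 2 * e) by ring,
      Int.add_mul_emod_self_left]
    decide
  · refine Or.inl ⟨by omega, ?_⟩
    rw [show (2 * (2 * e) + 1) ^ 2 = 1 + 8 * (2 * e ^ 2 + e) by ring,
      Int.add_mul_emod_self_left]
    decide
  · refine Or.inl ⟨by omega, ?_⟩
    rw [show (2 * (2 * e + 1) + 1) ^ 2 = 1 + 8 * (2 * e ^ 2 + 3 * e + 1) by ring,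
      Int.add_mul_emod_self_left]
    decide

private lemma caseN2 (k x y z : ℤ) (hq : x ^ 2 + 5 * y ^ 2 + 10 * z ^ 2 = 2 * k)
    (hpar : x % 2 = y % 2) (h4 : (x + y + 2 * z) % 4 = 2) :
    ∃ a b c : ℤ, a % 2 = 1 ∧ b % 2 = 1 ∧ c % 2 = 1 ∧
      a ^ 2 + 5 * b ^ 2 + 10 * c ^ 2 = 8 * k := by
  obtain ⟨a, ha⟩ : ∃ a, x + 5 * y + 10 * z = 2 * a := ⟨(x + 5 * y + 10 * z) / 2, by omega⟩
  obtain ⟨b, hb⟩ : ∃ b, x - 3 * y + 2 * z = 2 * b := ⟨(x - 3 * y + 2 * z) / 2, by omega⟩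
  obtain ⟨c, hc⟩ : ∃ c, x + y - 2 * z = 2 * c := ⟨(x + y - 2 * z) / 2, by omega⟩
  refine ⟨a, b, c, by omega, by omega, by omega, ?_⟩
  have h : 4 * (a ^ 2 + 5 * b ^ 2 + 10 * c ^ 2) = 4 * (8 * k) := by
    linear_combination (-(2 * a) - (x + 5 * y + 10 * z)) * ha
      - 5 * (2 * b + (x - 3 * y + 2 * z)) * hb
      - 10 * (2 * c + (x + y - 2 * z)) * hc + 16 * hq
  linarith

private lemma caseN (k x y z : ℤ) (hq : x ^ 2 + 5 * y ^ 2 + 10 * z ^ 2 = 2 * k)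
    (hpar : x % 2 = y % 2) (hcond : (x + y + 2 * z) % 4 = 2 ∨ x % 2 = 1) :
    ∃ a b c : ℤ, a % 2 = 1 ∧ b % 2 = 1 ∧ c % 2 = 1 ∧
      a ^ 2 + 5 * b ^ 2 + 10 * c ^ 2 = 8 * k := by
  rcases eq_or_ne ((x + y + 2 * z) % 4) 2 with h4 | h4
  · exact caseN2 k x y z hq hpar h4
  · have hx : x % 2 = 1 := by tauto
    exact caseN2 k (-x) y z (by linear_combination hq) (by omega) (by omega)

private lemma caseM2 (k z u t : ℤ) (hq : 5 * z ^ 2 + 2 * u ^ 2 + 10 * t ^ 2 = k)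
    (h4 : (z + 3 * u + t) % 4 = 2) :
    ∃ a b c : ℤ, a % 2 = 1 ∧ b % 2 = 1 ∧ c % 2 = 1 ∧
      a ^ 2 + 5 * b ^ 2 + 10 * c ^ 2 = 8 * k := by
  obtain ⟨a, ha⟩ : ∃ a, 5 * z + 7 * u + 5 * t = 2 * a := ⟨(5 * z + 7 * u + 5 * t) / 2, by omega⟩
  obtain ⟨b, hb⟩ : ∃ b, 5 * z - u - 3 * t = 2 * b := ⟨(5 * z - u - 3 * t) / 2, by omega⟩
  obtain ⟨c, hc⟩ : ∃ c, z - u + 5 * t = 2 * c := ⟨(z - u + 5 * t) / 2, by omega⟩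
  refine ⟨a, b, c, by omega, by omega, by omega, ?_⟩
  have h : 4 * (a ^ 2 + 5 * b ^ 2 + 10 * c ^ 2) = 4 * (8 * k) := by
    linear_combination (-(2 * a) - (5 * z + 7 * u + 5 * t)) * ha
      - 5 * (2 * b + (5 * z - u - 3 * t)) * hb
      - 10 * (2 * c + (z - u + 5 * t)) * hc + 32 * hq
  linarith

private lemma caseM (k z u t : ℤ) (hq : 5 * z ^ 2 + 2 * u ^ 2 + 10 * t ^ 2 = k)
    (hz : z % 2 = 1) (hut : (u + t) % 2 = 1) :
    ∃ a b c : ℤ, a % 2 = 1 ∧ b % 2 = 1 ∧ c % 2 = 1 ∧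
      a ^ 2 + 5 * b ^ 2 + 10 * c ^ 2 = 8 * k := by
  rcases eq_or_ne ((z + 3 * u + t) % 4) 2 with h4 | h4
  · exact caseM2 k z u t hq h4
  · exact caseM2 k (-z) u t (by linear_combination hq) (by omega)

private lemma key : ∀ N : ℕ, ∀ k x y z : ℤ, 0 < k → k ≤ N →
    x ^ 2 + 5 * y ^ 2 + 10 * z ^ 2 = 2 * k →
    ∃ a b c : ℤ, a % 2 = 1 ∧ b % 2 = 1 ∧ c % 2 = 1 ∧
      a ^ 2 + 5 * b ^ 2 + 10 * c ^ 2 = 8 * k := by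
  intro N
  induction N with
  | zero => intro k x y z hk hkN _; exfalso; omega
  | succ N ih =>
    intro k x y z hk hkN hq
    have hpar : x % 2 = y % 2 := by
      have f1 := sq_mod8 x; have f2 := sq_mod8 y; have f3 := sq_mod8 z
      obtain ⟨A, hA⟩ : ∃ A, x ^ 2 = A := ⟨_, rfl⟩
      obtain ⟨B, hB⟩ : ∃ B, y ^ 2 = B := ⟨_, rfl⟩
      obtain ⟨C, hC⟩ : ∃ C, z ^ 2 = C := ⟨_, rfl⟩
      rw [hA, hB, hC] at hq
      rw [hA] at f1; rw [hB] at f2; rw [hC] at f3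
      omega
    rcases eq_or_ne (x % 2) 1 with hx | hx
    · exact caseN k x y z hq hpar (Or.inr hx)
    · rcases eq_or_ne (z % 2) 1 with hz | hz
      · rcases eq_or_ne ((x - y) % 4) 0 with hxy | hxy
        · exact caseN k x y z hq hpar (Or.inl (by omega))
        · obtain ⟨u, rfl⟩ : ∃ u, x = 2 * u := ⟨x / 2, by omega⟩
          obtain ⟨t, rfl⟩ : ∃ t, y = 2 * t := ⟨y / 2, by omega⟩
          exact caseM k z u t (by linarith [hq]) hz (by omega)
      · rcases eq_or_ne ((x - y) % 4) 2 with hxy | hxy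
        · exact caseN k x y z hq hpar (Or.inl (by omega))
        · obtain ⟨u, rfl⟩ : ∃ u, x = 2 * u := ⟨x / 2, by omega⟩
          obtain ⟨t, rfl⟩ : ∃ t, y = 2 * t := ⟨y / 2, by omega⟩
          obtain ⟨w, rfl⟩ : ∃ w, z = 2 * w := ⟨z / 2, by omega⟩
          have hQ : 2 * (u ^ 2 + 5 * t ^ 2 + 10 * w ^ 2) = k := by linarith [hq]
          have hut : u % 2 = t % 2 := by omega
          have hev : (u ^ 2 + 5 * t ^ 2 + 10 * w ^ 2) % 2 = 0 := by
        
            have f1 := sq_mod8 u; have f2 := sq_mod8 t; have f3 := sq_mod8 w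
            obtain ⟨A, hA⟩ : ∃ A, u ^ 2 = A := ⟨_, rfl⟩
            obtain ⟨B, hB⟩ : ∃ B, t ^ 2 = B := ⟨_, rfl⟩
            obtain ⟨C, hC⟩ : ∃ C, w ^ 2 = C := ⟨_, rfl⟩
            rw [hA, hB, hC]
            rw [hA] at f1; rw [hB] at f2; rw [hC] at f3
            omega
          obtain ⟨Q, hQdef⟩ : ∃ Q, u ^ 2 + 5 * t ^ 2 + 10 * w ^ 2 = Q := ⟨_, rfl⟩
          rw [hQdef] at hQ hev
          obtain ⟨m, hm⟩ : ∃ m, Q = 2 * m := ⟨Q / 2, by omega⟩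
          obtain ⟨a, b, c, ha, hb, hc, habc⟩ :=
            ih m u t w (by omega) (by omega) (by rw [hQdef]; omega)
          exact caseN k a b c (habc.trans (by omega : (8 : ℤ) * m = 2 * k)) (by omega)
            (Or.inr ha)

theorem odd_solution_of_solution (n : ℤ) (hn : 0 < n) (h5 : ¬ (5 ∣ n))
    (h : ∃ X Y Z : ℤ, X ^ 2 + 5 * Y ^ 2 + 10 * Z ^ 2 = 8 * n) :
    ∃ a b c : ℤ, a ≡ 1 [ZMOD 2] ∧ b ≡ 1 [ZMOD 2] ∧ c ≡ 1 [ZMOD 2] ∧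
      a ^ 2 + 5 * b ^ 2 + 10 * c ^ 2 = 8 * n := by
  obtain ⟨X, Y, Z, hq⟩ := h
  have hd : (X % 2 = 1 ∧ Y % 2 = 1 ∧ Z % 2 = 1) ∨
      (X % 2 = 0 ∧ Y % 2 = 0 ∧ Z % 2 = 0) := by
    have f1 := sq_mod8 X; have f2 := sq_mod8 Y; have f3 := sq_mod8 Z
    obtain ⟨A, hA⟩ : ∃ A, X ^ 2 = A := ⟨_, rfl⟩
    obtain ⟨B, hB⟩ : ∃ B, Y ^ 2 = B := ⟨_, rfl⟩
    obtain ⟨C, hC⟩ : ∃ C, Z ^ 2 = C := ⟨_, rfl⟩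
    rw [hA, hB, hC] at hq
    rw [hA] at f1; rw [hB] at f2; rw [hC] at f3
    omega
  rcases hd with ⟨h1, h2, h3⟩ | ⟨h1, h2, h3⟩
  · exact ⟨X, Y, Z, Int.modEq_iff_dvd.mpr (by omega), Int.modEq_iff_dvd.mpr (by omega),
      Int.modEq_iff_dvd.mpr (by omega), hq⟩
  · obtain ⟨x, rfl⟩ : ∃ x, X = 2 * x := ⟨X / 2, by omega⟩
    obtain ⟨y, rfl⟩ : ∃ y, Y = 2 * y := ⟨Y / 2, by omega⟩
    obtain ⟨z, rfl⟩ : ∃ z, Z = 2 * z := ⟨Z / 2, by omega⟩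
    obtain ⟨a, b, c, ha, hb, hc, habc⟩ :=
      key n.toNat n x y z hn (by omega) (by linarith [hq])
    exact ⟨a, b, c, Int.modEq_iff_dvd.mpr (by omega), Int.modEq_iff_dvd.mpr (by omega),
      Int.modEq_iff_dvd.mpr (by omega), habc⟩
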